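/- Let T and A be positive semidefinite 2×2 complex matrices and p₁,…,p_m positive reals summing to 1. Then the trace Tr[T^{p₁} A T^{p₂} A ⋯ T^{p_m} A] is a nonnegative real number. -/

import Mathlib

open Matrix ComplexOrder

namespace TraceFracPowAux

/-- The set of 2×2 complex matrices of the form `[[α, γz],[δ conj z, β]]`
with nonnegative real coefficients. -/
def goodSet (z : ℂ) : Set (Matrix (Fin 2) (Fin 2) ℂ) :=
  {P | ∃ α β γ δ : ℝ, 0 ≤ α ∧ 0 ≤ β ∧ 0 ≤ γ ∧ 0 ≤ δ ∧
    P 0 0 = (α : ℂ) ∧ P 1 1 = (β : ℂ) ∧ P 0 1 = (γ : ℂ) * z ∧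
    P 1 0 = (δ : ℂ) * (starRingEnd ℂ) z}

lemma good_one (z : ℂ) : (1 : Matrix (Fin 2) (Fin 2) ℂ) ∈ goodSet z := by
  exact ⟨1, 1, 0, 0, zero_le_one, zero_le_one, le_refl 0, le_refl 0, by simp, by simp,
    by simp [Matrix.one_apply], by simp [Matrix.one_apply]⟩

lemma good_mul (z : ℂ) {P Q : Matrix (Fin 2) (Fin 2) ℂ}
    (hP : P ∈ goodSet z) (hQ : Q ∈ goodSet z) : P * Q ∈ goodSet z := by
  obtain ⟨α, β, γ, δ, hα, hβ, hγ, hδ, e00, e11, e01, e10⟩ := hP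
  obtain ⟨α', β', γ', δ', hα', hβ', hγ', hδ', f00, f11, f01, f10⟩ := hQ
  have hn := Complex.normSq_nonneg z
  refine ⟨α * α' + γ * δ' * Complex.normSq z, δ * γ' * Complex.normSq z + β * β',
    α * γ' + γ * β', δ * α' + β * δ',
    by have := mul_nonneg (mul_nonneg hγ hδ') hn; positivity,
    by have := mul_nonneg (mul_nonneg hδ hγ') hn; positivity,
    by positivity, by positivity, ?_, ?_, ?_, ?_⟩ <;>
    simp only [Matrix.mul_apply, Fin.sum_univ_two, e00, e11, e01, e10, f00, f11, f01, f10] <;>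
    push_cast
  · linear_combination (γ : ℂ) * (δ' : ℂ) * Complex.mul_conj z
  · linear_combination (δ : ℂ) * (γ' : ℂ) * Complex.mul_conj z
  · ring
  · ring

lemma good_list_prod (z : ℂ) (l : List (Matrix (Fin 2) (Fin 2) ℂ))
    (h : ∀ M ∈ l, M ∈ goodSet z) : l.prod ∈ goodSet z := by
  induction l with
  | nil => simpa using good_one z
  | cons M l ih =>
    rw [List.prod_cons]
    exact good_mul z (h M (by simp)) (ih fun N hN => h N (by simp [hN]))

lemma conj_prod (U : Matrix (Fin 2) (Fin 2) ℂ) (hU : U * star U = 1) (hU' : star U * U = 1)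
    {m : ℕ} (C : Fin m → Matrix (Fin 2) (Fin 2) ℂ) :
    (List.ofFn fun i => U * C i * star U).prod = U * (List.ofFn C).prod * star U := by
  induction m with
  | zero => simp [hU]
  | succ n ih =>
    rw [List.ofFn_succ, List.ofFn_succ, List.prod_cons, List.prod_cons,
      ih (fun i => C i.succ)]
    calc U * C 0 * star U * (U * (List.ofFn fun i => C i.succ).prod * star U)
        = U * C 0 * (star U * U) * (List.ofFn fun i => C i.succ).prod * star U := by
          simp only [mul_assoc]
      _ = U * (C 0 * (List.ofFn fun i => C i.succ).prod) * star U := by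
          rw [hU']; simp only [mul_one, mul_assoc]

end TraceFracPowAux

open TraceFracPowAux in
open Matrix ComplexOrder in
theorem trace_prod_fracPow_nonneg {m : ℕ}
    (T A : Matrix (Fin 2) (Fin 2) ℂ) (hT : T.PosSemidef) (hA : A.PosSemidef)
    (p : Fin m → ℝ) (hp : ∀ i, 0 < p i) (hsum : ∑ i, p i = 1) :
    0 ≤ trace (List.ofFn (fun i : Fin m => hT.1.cfc (fun x : ℝ => x ^ p i) * A)).prod := by
  set U : Matrix (Fin 2) (Fin 2) ℂ := (Matrix.IsHermitian.eigenvectorUnitary hT.1 : Matrix (Fin 2) (Fin 2) ℂ) with hUdef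
  have hU' : star U * U = 1 := Unitary.star_mul_self_of_mem (SetLike.coe_mem _)
  have hU : U * star U = 1 := Unitary.mul_star_self_of_mem (SetLike.coe_mem _)
  set B : Matrix (Fin 2) (Fin 2) ℂ := star U * A * U with hBdef
  have hB : B.PosSemidef := by
    rw [hBdef, Matrix.star_eq_conjTranspose]
    exact hA.conjTranspose_mul_mul_same U
  set z : ℂ := B 0 1 with hzdef
  -- diagonal entries of a PSD matrix are nonneg reals
  have hdiag : ∀ i : Fin 2, B i i = ((B i i).re : ℂ) ∧ 0 ≤ (B i i).re := by
    intro i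
    have h := hB.dotProduct_mulVec_nonneg (Pi.single i 1)
    have hval : dotProduct (star (Pi.single i 1)) (B *ᵥ Pi.single i 1) = B i i := by
      simp [dotProduct, Matrix.mulVec, Pi.single_apply]
    rw [hval, Complex.nonneg_iff] at h
    exact ⟨Complex.ext (by simp) (by simp [← h.2]), h.1⟩
  have hB10 : B 1 0 = (starRingEnd ℂ) z := by
    have h := congrFun (congrFun hB.1 1) 0
    rw [Matrix.conjTranspose_apply] at h
    rw [hzdef, ← h]
    rfl
  -- the diagonal matrices
  set D : Fin m → Matrix (Fin 2) (Fin 2) ℂ := fun i =>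
    Matrix.diagonal (RCLike.ofReal ∘ (fun x : ℝ => x ^ p i) ∘ hT.1.eigenvalues) with hDdef
  have hfact : ∀ i : Fin m, hT.1.cfc (fun x : ℝ => x ^ p i) * A = U * (D i * B) * star U := by
    intro i
    rw [Matrix.IsHermitian.cfc, hBdef]
    calc U * Matrix.diagonal (RCLike.ofReal ∘ (fun x : ℝ => x ^ p i) ∘ hT.1.eigenvalues) * star U * A
        = U * D i * (star U * A * (U * star U)) := by rw [hU]; simp only [mul_one, mul_assoc, hDdef]
      _ = U * (D i * (star U * A * U)) * star U := by simp only [mul_assoc]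
  have hgood : ∀ i : Fin m, D i * B ∈ goodSet z := by
    intro i
    have hd : ∀ j : Fin 2, (0:ℝ) ≤ (hT.1.eigenvalues j) ^ p i :=
      fun j => Real.rpow_nonneg (hT.eigenvalues_nonneg j) _
    refine ⟨(hT.1.eigenvalues 0) ^ p i * (B 0 0).re,
      (hT.1.eigenvalues 1) ^ p i * (B 1 1).re,
      (hT.1.eigenvalues 0) ^ p i, (hT.1.eigenvalues 1) ^ p i,
      mul_nonneg (hd 0) (hdiag 0).2, mul_nonneg (hd 1) (hdiag 1).2, hd 0, hd 1, ?_, ?_, ?_, ?_⟩ <;>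
      simp only [hDdef, Matrix.diagonal_mul, Function.comp_apply, RCLike.ofReal_alg,
        Complex.real_smul, Complex.ofReal_one, mul_one]
    · rw [(hdiag 0).1]; push_cast; simp
    · rw [(hdiag 1).1]; push_cast; simp
    · rfl
    · rw [hB10, hzdef]
  have hrw : (List.ofFn (fun i : Fin m => hT.1.cfc (fun x : ℝ => x ^ p i) * A)).prod
      = U * (List.ofFn fun i => D i * B).prod * star U := by
    rw [show (List.ofFn (fun i : Fin m => hT.1.cfc (fun x : ℝ => x ^ p i) * A))
        = List.ofFn (fun i => U * (D i * B) * star U) from by simp only [hfact]]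
    exact conj_prod U hU hU' _
  rw [hrw]
  have htr : trace (U * (List.ofFn fun i => D i * B).prod * star U)
      = trace ((List.ofFn fun i => D i * B).prod) := by
    rw [Matrix.trace_mul_cycle, hU', one_mul]
  rw [htr]
  obtain ⟨α, β, γ, δ, hα, hβ, _, _, e00, e11, _, _⟩ :=
    good_list_prod z _ (by
      intro M hM
      obtain ⟨i, rfl⟩ := List.mem_ofFn.mp hM
      exact hgood i)
  rw [Matrix.trace_fin_two, e00, e11, ← Complex.ofReal_add]
  exact Complex.zero_le_real.mpr (by positivity)
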